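/- Let λ > 0 and consider the system ẋ = λ·(u − x)³ with output y = u − x, where u is continuously differentiable. Then the storage function V(t) = (2/(3λ))·y(t)² satisfies d/dt V(t) ≤ (1/λ)^{4/3}·|u̇(t)|^{4/3} − y(t)⁴ for all t. -/

import Mathlib

open Real

lemma young_aux (lam : ℝ) (hlam : 0 < lam) (y v : ℝ) :
    (4 / (3 * lam)) * y * v
      ≤ (1 / lam) ^ ((4 : ℝ) / 3) * |v| ^ ((4 : ℝ) / 3) + (1 / 3) * y ^ 4 := by
  have hconj : ((4 : ℝ)).HolderConjugate (4 / 3) := by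
    rw [Real.holderConjugate_iff]; constructor <;> norm_num
  set c : ℝ := ((4 : ℝ) / 3) ^ ((1 : ℝ) / 4) with hc
  set d : ℝ := ((4 : ℝ) / 3) ^ ((3 : ℝ) / 4) / lam with hd
  have hc0 : 0 ≤ c := Real.rpow_nonneg (by norm_num) _
  have hd0 : 0 ≤ d := div_nonneg (Real.rpow_nonneg (by norm_num) _) hlam.le
  have hY := Real.young_inequality_of_nonneg
    (mul_nonneg hc0 (abs_nonneg y)) (mul_nonneg hd0 (abs_nonneg v)) hconj
  have hcd : c * d = 4 / (3 * lam) := by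
    rw [hc, hd, mul_div_assoc', ← Real.rpow_add (by norm_num : (0:ℝ) < 4/3),
      show (1:ℝ)/4 + 3/4 = 1 by norm_num, Real.rpow_one]
    ring
  have hc4 : (c * |y|) ^ (4 : ℝ) = (4 / 3) * y ^ 4 := by
    rw [Real.mul_rpow hc0 (abs_nonneg y), hc, ← Real.rpow_mul (by norm_num : (0:ℝ) ≤ 4/3),
      show (1:ℝ)/4 * 4 = 1 by norm_num, Real.rpow_one,
      show (4:ℝ) = ((4:ℕ):ℝ) by norm_num, Real.rpow_natCast,
      ← abs_pow, abs_of_nonneg (by positivity : (0:ℝ) ≤ y^4)]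
  have hd43 : (d * |v|) ^ ((4 : ℝ) / 3) = (4 / 3) * ((1 / lam) ^ ((4 : ℝ) / 3) * |v| ^ ((4 : ℝ) / 3)) := by
    rw [Real.mul_rpow hd0 (abs_nonneg v), hd, div_eq_mul_inv, ← one_div,
      Real.mul_rpow (Real.rpow_nonneg (by norm_num) _) (by positivity),
      ← Real.rpow_mul (by norm_num)]
    norm_num
    ring
  have h1 : (4 / (3 * lam)) * y * v ≤ (c * |y|) * (d * |v|) := by
    have : (4 / (3 * lam)) * y * v ≤ (4 / (3 * lam)) * (|y| * |v|) := by
      have h2 : y * v ≤ |y * v| := le_abs_self _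
      rw [abs_mul] at h2
      have h3 : (0:ℝ) ≤ 4 / (3 * lam) := by positivity
      calc (4 / (3 * lam)) * y * v = (4 / (3 * lam)) * (y * v) := by ring
        _ ≤ (4 / (3 * lam)) * (|y| * |v|) := by exact mul_le_mul_of_nonneg_left h2 h3
    calc (4 / (3 * lam)) * y * v ≤ (4 / (3 * lam)) * (|y| * |v|) := this
      _ = (c * |y|) * (d * |v|) := by rw [← hcd]; ring
  calc (4 / (3 * lam)) * y * v ≤ (c * |y|) * (d * |v|) := h1
    _ ≤ (c * |y|) ^ (4:ℝ) / 4 + (d * |v|) ^ ((4:ℝ)/3) / (4/3) := hY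
    _ = (1 / lam) ^ ((4 : ℝ) / 3) * |v| ^ ((4 : ℝ) / 3) + (1 / 3) * y ^ 4 := by
        rw [hc4, hd43]; ring

theorem stmt_6 (lam : ℝ) (hlam : 0 < lam) (u x u' : ℝ → ℝ)
    (hu : ∀ t, HasDerivAt u (u' t) t)
    (hx : ∀ t, HasDerivAt x (lam * (u t - x t) ^ 3) t) :
    ∀ t, 0 ≤ t →
      deriv (fun s => (2 / (3 * lam)) * (u s - x s) ^ 2) t
        ≤ (1 / lam) ^ ((4 : ℝ) / 3) * |u' t| ^ ((4 : ℝ) / 3) - (u t - x t) ^ 4 := by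
  intro t ht
  have hy : HasDerivAt (fun s => u s - x s) (u' t - lam * (u t - x t) ^ 3) t :=
    (hu t).sub (hx t)
  have hV : HasDerivAt (fun s => (2 / (3 * lam)) * (u s - x s) ^ 2)
      ((2 / (3 * lam)) * (2 * (u t - x t) ^ 1 * (u' t - lam * (u t - x t) ^ 3))) t :=
    (hy.pow 2).const_mul _
  rw [hV.deriv]
  set y := u t - x t
  have key := young_aux lam hlam y (u' t)
  have hl : (2 / (3 * lam)) * (2 * y ^ 1 * (u' t - lam * y ^ 3))
      = (4 / (3 * lam)) * y * (u' t) - (4/3) * y ^ 4 := by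
    field_simp
    ring
  rw [hl]
  linarith
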